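/- arXiv:1410.0619 — 2 statements merged into one kernel-verified Lean document; each statement's English description precedes it below -/
import Mathlib

section
/- Consider the slab Z^{d-1} × {0,1,...,K} with nearest-neighbor adjacency, and a 2×...×2×(K+1) pillar P = Q × {0,...,K} where Q ⊂ Z^{d-1} is a product of d-1 intervals each of length 2 (for d-1 = 2: Q = {2i,2i+1}×{2j,2j+1}). Suppose the bottom layer Z^{d-1}×{0} is frozen at +1 and all vertices of P currently have spin +1. Then every non-frozen vertex of P has strictly more than half of its neighbors (in the slab) inside P with spin +1: a vertex in the top layer K has (for d-1=2) 3 neighbors in P out of 5 total, and a vertex in an intermediate layer has 4 neighbors in P out of 6 total. Hence under majority dynamics no vertex of P ever flips to -1. -/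
/-- Adjacency in the slab `ℤ² × {0,…,K}`: both endpoints lie in the slab and are
at `ℓ¹` distance 1.  Points of `ℤ × ℤ × ℤ` are `(x₁, x₂, k)` with height `k`. -/
def slabAdj (K : ℤ) (x y : ℤ × ℤ × ℤ) : Prop :=
  0 ≤ x.2.2 ∧ x.2.2 ≤ K ∧ 0 ≤ y.2.2 ∧ y.2.2 ≤ K ∧
    |x.1 - y.1| + |x.2.1 - y.2.1| + |x.2.2 - y.2.2| = 1

/-- The `2 × 2 × (K+1)` pillar `P = {2i, 2i+1} × {2j, 2j+1} × {0,…,K}`. -/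
def inPillar (K i j : ℤ) (x : ℤ × ℤ × ℤ) : Prop :=
  (x.1 = 2 * i ∨ x.1 = 2 * i + 1) ∧ (x.2.1 = 2 * j ∨ x.2.1 = 2 * j + 1) ∧
    0 ≤ x.2.2 ∧ x.2.2 ≤ K

section aux
variable {K i j a b k : ℤ}

lemma adjTop_eq (hK : 1 ≤ K) :
    {y | slabAdj K (a,b,K) y} =
      ({(a+1,b,K),(a-1,b,K),(a,b+1,K),(a,b-1,K),(a,b,K-1)} : Set (ℤ×ℤ×ℤ)) := by
  ext ⟨y1,y2,y3⟩
  simp only [slabAdj, Set.mem_setOf_eq, Set.mem_insert_iff, Set.mem_singleton_iff,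
    Prod.mk.injEq, Int.abs_eq_natAbs]
  omega

lemma adjTop_card (hK : 1 ≤ K) : {y | slabAdj K (a,b,K) y}.ncard = 5 := by
  rw [adjTop_eq hK,
    Set.ncard_insert_of_notMem (by simp only [Set.mem_insert_iff, Set.mem_singleton_iff, Prod.mk.injEq]; omega),
    Set.ncard_insert_of_notMem (by simp only [Set.mem_insert_iff, Set.mem_singleton_iff, Prod.mk.injEq]; omega),
    Set.ncard_insert_of_notMem (by simp only [Set.mem_insert_iff, Set.mem_singleton_iff, Prod.mk.injEq]; omega),
    Set.ncard_pair (by simp only [ne_eq, Prod.mk.injEq]; omega)]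

lemma pilTop_eq (hK : 1 ≤ K) (ha : a = 2*i ∨ a = 2*i+1) (hb : b = 2*j ∨ b = 2*j+1) :
    {y | slabAdj K (a,b,K) y ∧ inPillar K i j y} =
      ({(4*i+1-a,b,K),(a,4*j+1-b,K),(a,b,K-1)} : Set (ℤ×ℤ×ℤ)) := by
  ext ⟨y1,y2,y3⟩
  simp only [slabAdj, inPillar, Set.mem_setOf_eq, Set.mem_insert_iff, Set.mem_singleton_iff,
    Prod.mk.injEq, Int.abs_eq_natAbs]
  omega

lemma pilTop_card (hK : 1 ≤ K) (ha : a = 2*i ∨ a = 2*i+1) (hb : b = 2*j ∨ b = 2*j+1) :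
    {y | slabAdj K (a,b,K) y ∧ inPillar K i j y}.ncard = 3 := by
  rw [pilTop_eq hK ha hb,
    Set.ncard_insert_of_notMem (by simp only [Set.mem_insert_iff, Set.mem_singleton_iff, Prod.mk.injEq]; omega),
    Set.ncard_pair (by simp only [ne_eq, Prod.mk.injEq]; omega)]

lemma adjMid_eq (hk1 : 1 ≤ k) (hk2 : k ≤ K - 1) :
    {y | slabAdj K (a,b,k) y} =
      ({(a+1,b,k),(a-1,b,k),(a,b+1,k),(a,b-1,k),(a,b,k+1),(a,b,k-1)} : Set (ℤ×ℤ×ℤ)) := by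
  ext ⟨y1,y2,y3⟩
  simp only [slabAdj, Set.mem_setOf_eq, Set.mem_insert_iff, Set.mem_singleton_iff,
    Prod.mk.injEq, Int.abs_eq_natAbs]
  omega

lemma adjMid_card (hk1 : 1 ≤ k) (hk2 : k ≤ K - 1) : {y | slabAdj K (a,b,k) y}.ncard = 6 := by
  rw [adjMid_eq hk1 hk2,
    Set.ncard_insert_of_notMem (by simp only [Set.mem_insert_iff, Set.mem_singleton_iff, Prod.mk.injEq]; omega),
    Set.ncard_insert_of_notMem (by simp only [Set.mem_insert_iff, Set.mem_singleton_iff, Prod.mk.injEq]; omega),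
    Set.ncard_insert_of_notMem (by simp only [Set.mem_insert_iff, Set.mem_singleton_iff, Prod.mk.injEq]; omega),
    Set.ncard_insert_of_notMem (by simp only [Set.mem_insert_iff, Set.mem_singleton_iff, Prod.mk.injEq]; omega),
    Set.ncard_pair (by simp only [ne_eq, Prod.mk.injEq]; omega)]

lemma pilMid_eq (hk1 : 1 ≤ k) (hk2 : k ≤ K - 1) (ha : a = 2*i ∨ a = 2*i+1)
    (hb : b = 2*j ∨ b = 2*j+1) :
    {y | slabAdj K (a,b,k) y ∧ inPillar K i j y} =
      ({(4*i+1-a,b,k),(a,4*j+1-b,k),(a,b,k+1),(a,b,k-1)} : Set (ℤ×ℤ×ℤ)) := by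
  ext ⟨y1,y2,y3⟩
  simp only [slabAdj, inPillar, Set.mem_setOf_eq, Set.mem_insert_iff, Set.mem_singleton_iff,
    Prod.mk.injEq, Int.abs_eq_natAbs]
  omega

lemma pilMid_card (hk1 : 1 ≤ k) (hk2 : k ≤ K - 1) (ha : a = 2*i ∨ a = 2*i+1)
    (hb : b = 2*j ∨ b = 2*j+1) :
    {y | slabAdj K (a,b,k) y ∧ inPillar K i j y}.ncard = 4 := by
  rw [pilMid_eq hk1 hk2 ha hb,
    Set.ncard_insert_of_notMem (by simp only [Set.mem_insert_iff, Set.mem_singleton_iff, Prod.mk.injEq]; omega),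
    Set.ncard_insert_of_notMem (by simp only [Set.mem_insert_iff, Set.mem_singleton_iff, Prod.mk.injEq]; omega),
    Set.ncard_pair (by simp only [ne_eq, Prod.mk.injEq]; omega)]

end aux

/-- In the slab `ℤ² × {0,…,K}` with the bottom layer frozen at `+1`, consider a
`2×2×(K+1)` pillar `P`.  A top-layer vertex of `P` has `5` slab-neighbors, `3`
of them in `P`; an intermediate-layer vertex has `6` slab-neighbors, `4` of them
in `P`.  Hence, under majority dynamics (a vertex with a strict majority of
agreeing neighbors never flips), once all vertices of `P` are `+1` they remain
`+1` forever. -/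
theorem stmt_16 (K : ℤ) (hK : 1 ≤ K) (i j : ℤ)
    (σ : ℕ → ℤ × ℤ × ℤ → ℤ)
    (hspin : ∀ t x, σ t x = 1 ∨ σ t x = -1)
    (hfrozen : ∀ t (x : ℤ × ℤ × ℤ), x.2.2 = 0 → σ t x = 1)
    (hrule : ∀ t (x : ℤ × ℤ × ℤ), 0 ≤ x.2.2 → x.2.2 ≤ K → σ t x = 1 →
      Set.ncard {y | slabAdj K x y ∧ σ t y = -1} <
        Set.ncard {y | slabAdj K x y ∧ σ t y = 1} →
      σ (t + 1) x = 1)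
    (t₀ : ℕ) (hinit : ∀ x, inPillar K i j x → σ t₀ x = 1) :
    ((∀ x, inPillar K i j x → x.2.2 = K →
        Set.ncard {y | slabAdj K x y} = 5 ∧
        Set.ncard {y | slabAdj K x y ∧ inPillar K i j y} = 3) ∧
      (∀ x, inPillar K i j x → 1 ≤ x.2.2 → x.2.2 ≤ K - 1 →
        Set.ncard {y | slabAdj K x y} = 6 ∧
        Set.ncard {y | slabAdj K x y ∧ inPillar K i j y} = 4)) ∧
    (∀ t, t₀ ≤ t → ∀ x, inPillar K i j x → σ t x = 1) := by
  -- key counting fact for any pillar vertex of positive height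
  have key : ∀ x : ℤ × ℤ × ℤ, inPillar K i j x → 1 ≤ x.2.2 →
      3 ≤ {y | slabAdj K x y ∧ inPillar K i j y}.ncard ∧
      {y | slabAdj K x y}.ncard ≤ {y | slabAdj K x y ∧ inPillar K i j y}.ncard + 2 ∧
      {y | slabAdj K x y}.Finite := by
    rintro ⟨a, b, k⟩ ⟨ha, hb, hk0, hkK⟩ hk1
    replace hk1 : 1 ≤ k := hk1
    replace hkK : k ≤ K := hkK
    rcases eq_or_lt_of_le hkK with hkeq | hklt
    · subst hkeq
      refine ⟨?_, ?_, ?_⟩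
      · rw [pilTop_card hK ha hb]
      · rw [pilTop_card hK ha hb, adjTop_card hK]
      · rw [adjTop_eq hK]
        exact (Set.finite_singleton _).insert _ |>.insert _ |>.insert _ |>.insert _
    · have hk2 : k ≤ K - 1 := by omega
      refine ⟨?_, ?_, ?_⟩
      · rw [pilMid_card hk1 hk2 ha hb]; omega
      · rw [pilMid_card hk1 hk2 ha hb, adjMid_card hk1 hk2]
      · rw [adjMid_eq hk1 hk2]
        exact (Set.finite_singleton _).insert _ |>.insert _ |>.insert _ |>.insert _ |>.insert _
  constructor
  · constructor
    · rintro ⟨a, b, k⟩ ⟨ha, hb, hk0, hkK⟩ hk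
      simp only at hk; subst hk
      exact ⟨adjTop_card hK, pilTop_card hK ha hb⟩
    · rintro ⟨a, b, k⟩ ⟨ha, hb, hk0, hkK⟩ hk1 hk2
      exact ⟨adjMid_card hk1 hk2, pilMid_card hk1 hk2 ha hb⟩
  · intro t ht
    induction t, ht using Nat.le_induction with
    | base => exact hinit
    | succ t ht ih =>
      intro x hx
      rcases eq_or_lt_of_le hx.2.2.1 with h0 | h1
      · exact hfrozen _ _ h0.symm
      · obtain ⟨h3, h2, hfin⟩ := key x hx h1
        apply hrule t x hx.2.2.1 hx.2.2.2 (ih x hx)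
        have hsubP : {y | slabAdj K x y ∧ inPillar K i j y} ⊆ {y | slabAdj K x y ∧ σ t y = 1} :=
          fun y hy => ⟨hy.1, ih y hy.2⟩
        have hsubA : {y | slabAdj K x y ∧ σ t y = 1} ⊆ {y | slabAdj K x y} := fun y hy => hy.1
        have h4 : {y | slabAdj K x y ∧ inPillar K i j y}.ncard ≤
            {y | slabAdj K x y ∧ σ t y = 1}.ncard :=
          Set.ncard_le_ncard hsubP (hfin.subset hsubA)
        have hsubN : {y | slabAdj K x y ∧ σ t y = -1} ⊆
            {y | slabAdj K x y} \ {y | slabAdj K x y ∧ inPillar K i j y} := by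
          rintro y ⟨hadj, hneg⟩
          refine ⟨hadj, fun hy => ?_⟩
          have := ih y hy.2
          omega
        have hd := Set.ncard_diff (s := {y | slabAdj K x y ∧ inPillar K i j y})
          (t := {y | slabAdj K x y}) (fun y hy => hy.1) (hfin.subset fun y hy => hy.1)
        have h5 := Set.ncard_le_ncard hsubN hfin.diff
        omega
end

section
/- Let B_L = {-L,...,L}^d with M < L, and let the 'protected set' be B_L[M], the M-trimming of B_L. Suppose at time t_0 all spins in B_L are +1, all spins at certain frozen vertices (including, for each corner C^i and direction j, a frozen +1 vertex at C^i + m e^j with |m| ≤ M inside B_L) never change, and the dynamics is the zero-temperature majority dynamics. Then for all t ≥ t_0 and all x ∈ B_L[M], σ_x(t) = +1; i.e., the set of vertices that can ever become -1 after t_0 is contained in the union of the 2^d corner cubes of side M. -/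
/-- Nearest-neighbor adjacency on `ℤ^d` (`ℓ¹` distance 1). -/
def nbr1 (d : ℕ) (x y : Fin d → ℤ) : Prop := (∑ i, |x i - y i|) = 1

/-- The corner of `B_L = {-L,…,L}^d` with sign pattern `ε`. -/
def cornerPt (d : ℕ) (L : ℤ) (ε : Fin d → Bool) : Fin d → ℤ :=
  fun i => if ε i then L else -L

private lemma cornerPt_true {d : ℕ} {L : ℤ} {ε : Fin d → Bool} {i : Fin d}
    (h : ε i = true) : cornerPt d L ε i = L := by simp [cornerPt, h]

private lemma cornerPt_false {d : ℕ} {L : ℤ} {ε : Fin d → Bool} {i : Fin d}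
    (h : ε i = false) : cornerPt d L ε i = -L := by simp [cornerPt, h]

private lemma nbr1_update (d : ℕ) (x : Fin d → ℤ) (i : Fin d) (v : ℤ)
    (hv : |x i - v| = 1) : nbr1 d x (Function.update x i v) := by
  unfold nbr1
  rw [Finset.sum_eq_single i]
  · simpa using hv
  · intro m _ hm
    simp [Function.update_of_ne hm]
  · intro h
    exact absurd (Finset.mem_univ i) h

private lemma nbr1_dest {d : ℕ} {x y : Fin d → ℤ} (h : nbr1 d x y) :
    ∃ i, |x i - y i| = 1 ∧ ∀ m, m ≠ i → y m = x m := by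
  unfold nbr1 at h
  have hne : ∃ i, x i ≠ y i := by
    by_contra hc
    push_neg at hc
    simp [hc] at h
  obtain ⟨i, hi⟩ := hne
  have h1 : 1 ≤ |x i - y i| := Int.one_le_abs (sub_ne_zero.mpr hi)
  have hsplit : |x i - y i| + ∑ m ∈ Finset.univ.erase i, |x m - y m| = 1 := by
    have := Finset.add_sum_erase Finset.univ (fun m => |x m - y m|) (Finset.mem_univ i)
    rw [this]
    exact h
  have hnn : ∀ m ∈ Finset.univ.erase i, 0 ≤ |x m - y m| := fun m _ => abs_nonneg _
  have hsum0 : ∑ m ∈ Finset.univ.erase i, |x m - y m| = 0 := by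
    have := Finset.sum_nonneg hnn
    omega
  refine ⟨i, by omega, fun m hm => ?_⟩
  have h2 := (Finset.sum_eq_zero_iff_of_nonneg hnn).mp hsum0 m (by simp [hm])
  have h3 := abs_eq_zero.mp h2
  omega

private lemma nbr_mem_image {d : ℕ} {x y : Fin d → ℤ} (h : nbr1 d x y) :
    y ∈ Finset.image
      (fun p : Fin d × Bool => Function.update x p.1 (x p.1 + if p.2 then 1 else -1))
      Finset.univ := by
  obtain ⟨i, hi, hmm⟩ := nbr1_dest h
  have hv : y i = x i + 1 ∨ y i = x i - 1 := by
    rcases abs_cases (x i - y i) with ⟨h1, _⟩ | ⟨h1, _⟩ <;> omega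
  simp only [Finset.mem_image, Finset.mem_univ, true_and]
  rcases hv with hv | hv
  · refine ⟨(i, true), ?_⟩
    funext m
    by_cases hm : m = i
    · subst hm; simp [hv]
    · simp [Function.update_of_ne hm, hmm m hm]
  · refine ⟨(i, false), ?_⟩
    funext m
    by_cases hm : m = i
    · subst hm; simp [hv]; omega
    · simp [Function.update_of_ne hm, hmm m hm]

/-- Inward neighbors of a protected vertex are protected. -/
private lemma inward_S (d : ℕ) (L M : ℤ) (hM : 0 < M) (hML : M < L)
    (f : (Fin d → Bool) → Fin d → (Fin d → ℤ))
    (hf : ∀ ε jj, (∀ i, i ≠ jj → f ε jj i = cornerPt d L ε i) ∧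
      |f ε jj jj - cornerPt d L ε jj| ≤ M ∧ (∀ i, |f ε jj i| ≤ L))
    (y : Fin d → ℤ) (hyB : ∀ i, |y i| ≤ L)
    (hyD : ∀ ε, ∃ j, |f ε j j - cornerPt d L ε j| ≤ |y j - cornerPt d L ε j|)
    (i : Fin d) :
    (∀ m, |Function.update y i (y i - if 0 < y i then 1 else -1) m| ≤ L) ∧
    (∀ ε, ∃ j, |f ε j j - cornerPt d L ε j| ≤
      |Function.update y i (y i - if 0 < y i then 1 else -1) j - cornerPt d L ε j|) := by
  constructor
  · intro m
    by_cases hm : m = i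
    · subst hm
      rw [Function.update_self]
      have h1 := hyB m
      by_cases h0 : 0 < y m <;>
        simp only [h0, if_true, if_false] <;>
        simp only [Int.abs_eq_natAbs] at h1 ⊢ <;> omega
    · rw [Function.update_of_ne hm]
      exact hyB m
  · intro ε
    obtain ⟨j, hj⟩ := hyD ε
    refine ⟨j, ?_⟩
    by_cases hji : j = i
    · subst hji
      rw [Function.update_self]
      have hkM : |f ε j j - cornerPt d L ε j| ≤ M := (hf ε j).2.1
      have hB := hyB j
      rcases Bool.eq_false_or_eq_true (ε j) with hε | hε <;>
        [rw [cornerPt_true hε] at hj hkM ⊢; rw [cornerPt_false hε] at hj hkM ⊢] <;>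
        by_cases h0 : 0 < y j <;>
        simp only [h0, if_true, if_false] <;>
        simp only [Int.abs_eq_natAbs] at hj hkM hB ⊢ <;>
        omega
    · rw [Function.update_of_ne hji]
      exact hj

/-- There always is a good outward neighbor, unless the vertex is frozen. -/
private lemma key_geom (d : ℕ) (L M : ℤ) (hM : 0 < M) (hML : M < L)
    (f : (Fin d → Bool) → Fin d → (Fin d → ℤ))
    (hf : ∀ ε jj, (∀ i, i ≠ jj → f ε jj i = cornerPt d L ε i) ∧
      |f ε jj jj - cornerPt d L ε jj| ≤ M ∧ (∀ i, |f ε jj i| ≤ L))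
    (y : Fin d → ℤ) (hyB : ∀ i, |y i| ≤ L)
    (hyD : ∀ ε, ∃ j, |f ε j j - cornerPt d L ε j| ≤ |y j - cornerPt d L ε j|)
    (hyF : ∀ ε j, y ≠ f ε j) :
    ∃ i, |y i| ≤ L - 1 ∧
      ∀ ε, ∃ j, |f ε j j - cornerPt d L ε j| ≤
        |Function.update y i (y i + if 0 < y i then 1 else -1) j - cornerPt d L ε j| := by
  by_contra hno
  push_neg at hno
  -- hno : ∀ i, |y i| ≤ L - 1 → ∃ ε, ∀ j, |upd j - c ε j| < |f ε j j - c ε j|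
  have hEps : ∀ (i : Fin d) (ε : Fin d → Bool),
      (∀ j, |Function.update y i (y i + if 0 < y i then 1 else -1) j - cornerPt d L ε j|
         < |f ε j j - cornerPt d L ε j|) →
      ∀ m, ε m = decide (0 < y m) := by
    intro i ε h m
    have h1 := h m
    have h2 : |f ε m m - cornerPt d L ε m| ≤ M := (hf ε m).2.1
    by_cases hmi : m = i
    · subst hmi
      rw [Function.update_self] at h1
      rcases Bool.eq_false_or_eq_true (ε m) with hε | hε
      · rw [hε]; symm; rw [decide_eq_true_iff]
        by_contra h0
        rw [cornerPt_true hε] at h1 h2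
        simp only [h0, if_false] at h1
        simp only [Int.abs_eq_natAbs] at h1 h2
        omega
      · rw [hε]; symm; rw [decide_eq_false_iff_not]
        intro h0
        rw [cornerPt_false hε] at h1 h2
        simp only [h0, if_true] at h1
        simp only [Int.abs_eq_natAbs] at h1 h2
        omega
    · rw [Function.update_of_ne hmi] at h1
      rcases Bool.eq_false_or_eq_true (ε m) with hε | hε
      · rw [hε]; symm; rw [decide_eq_true_iff]
        by_contra h0
        rw [cornerPt_true hε] at h1 h2
        simp only [Int.abs_eq_natAbs] at h1 h2
        omega
      · rw [hε]; symm; rw [decide_eq_false_iff_not]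
        intro h0
        rw [cornerPt_false hε] at h1 h2
        simp only [Int.abs_eq_natAbs] at h1 h2
        omega
  by_cases hAll : ∀ i, L ≤ |y i|
  · -- y is a corner, hence y is a frozen vertex : contradiction
    set ε : Fin d → Bool := fun m => decide (0 < y m) with hεdef
    have hyc : ∀ m, y m = cornerPt d L ε m := by
      intro m
      have h1 := hyB m
      have h2 := hAll m
      by_cases h0 : 0 < y m
      · have hεt : ε m = true := by simp [hεdef, h0]
        rw [cornerPt_true hεt]
        simp only [Int.abs_eq_natAbs] at h1 h2
        omega
      · have hεt : ε m = false := by simp [hεdef, h0]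
        rw [cornerPt_false hεt]
        simp only [Int.abs_eq_natAbs] at h1 h2
        omega
    obtain ⟨j, hj⟩ := hyD ε
    have h0 : y j - cornerPt d L ε j = 0 := by rw [hyc j]; ring
    rw [h0, abs_zero] at hj
    have hfc : f ε j j = cornerPt d L ε j := by
      have h2 : |f ε j j - cornerPt d L ε j| = 0 := le_antisymm hj (abs_nonneg _)
      have h3 := abs_eq_zero.mp h2
      omega
    apply hyF ε j
    funext m
    by_cases hmj : m = j
    · subst hmj
      rw [hyc m, hfc]
    · rw [hyc m, (hf ε j).1 m hmj]
  · push_neg at hAll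
    obtain ⟨i₀, hi₀⟩ := hAll
    have hi₀' : |y i₀| ≤ L - 1 := by omega
    obtain ⟨ε, hD⟩ := hno i₀ hi₀'
    have hεeq : ∀ m, ε m = decide (0 < y m) := hEps i₀ ε hD
    obtain ⟨j, hj⟩ := hyD ε
    have hji : j = i₀ := by
      by_contra hne
      have h1 := hD j
      rw [Function.update_of_ne hne] at h1
      exact absurd hj (not_le.mpr h1)
    subst hji
    -- every other coordinate of y is at the boundary
    have hOther : ∀ m, m ≠ j → L ≤ |y m| := by
      intro m hm
      by_contra hLm
      have hLm' : |y m| ≤ L - 1 := by omega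
      obtain ⟨ε', hD'⟩ := hno m hLm'
      have hee : ε' = ε := by
        funext r
        rw [hEps m ε' hD' r, hεeq r]
      have h1 := hD' j
      rw [hee, Function.update_of_ne (Ne.symm hm)] at h1
      exact absurd hj (not_le.mpr h1)
    apply hyF ε j
    funext m
    by_cases hmj : m = j
    · subst hmj
      have h1 := hD m
      rw [Function.update_self] at h1
      have h2 : |f ε m m - cornerPt d L ε m| ≤ M := (hf ε m).2.1
      have h3 : |f ε m m| ≤ L := (hf ε m).2.2 m
      have h4 := hyB m
      have h5 := hεeq m
      by_cases h0 : 0 < y m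
      · have hεt : ε m = true := by rw [h5]; simp [h0]
        rw [cornerPt_true hεt] at h1 h2 hj
        simp only [h0, if_true] at h1
        simp only [Int.abs_eq_natAbs] at h1 h2 h3 h4 hj ⊢
        omega
      · have hεt : ε m = false := by rw [h5]; simp [h0]
        rw [cornerPt_false hεt] at h1 h2 hj
        simp only [h0, if_false] at h1
        simp only [Int.abs_eq_natAbs] at h1 h2 h3 h4 hj ⊢
        omega
    · rw [(hf ε j).1 m hmj]
      have h1 := hOther m hmj
      have h2 := hyB m
      have h5 := hεeq m
      by_cases h0 : 0 < y m
      · have hεt : ε m = true := by rw [h5]; simp [h0]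
        rw [cornerPt_true hεt]
        simp only [Int.abs_eq_natAbs] at h1 h2 ⊢
        omega
      · have hεt : ε m = false := by rw [h5]; simp [h0]
        rw [cornerPt_false hεt]
        simp only [Int.abs_eq_natAbs] at h1 h2 ⊢
        omega

/-- Zero-temperature majority dynamics on `ℤ^d`: a `+1` vertex can flip to `-1`
only if at least `d` of its `2d` nearest neighbors are `-1`.  Suppose that at
time `t₀` all spins in `B_L` are `+1` and that for each corner `Cⁱ` of `B_L`
(sign pattern `ε`) and each direction `j` there is a frozen `+1` vertex
`f ε j = Cⁱ + m eʲ` with `|m| ≤ M`, inside `B_L`, whose spin never changes.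
Then for all `t ≥ t₀` every vertex of the `M`-trimming `B_L[M]` (the box minus
its `2^d` corner cubes of side `M`) has spin `+1`; i.e. the vertices that can
ever become `-1` after `t₀` are contained in the corner cubes. -/
theorem stmt_19 (d : ℕ) (L M : ℤ) (hM : 0 < M) (hML : M < L)
    (σ : ℕ → (Fin d → ℤ) → ℤ)
    (hspin : ∀ t x, σ t x = 1 ∨ σ t x = -1)
    (f : (Fin d → Bool) → Fin d → (Fin d → ℤ))
    (hf : ∀ ε jj, (∀ i, i ≠ jj → f ε jj i = cornerPt d L ε i) ∧
      |f ε jj jj - cornerPt d L ε jj| ≤ M ∧ (∀ i, |f ε jj i| ≤ L))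
    (hfrozen : ∀ t ε jj, σ t (f ε jj) = 1)
    (hflip : ∀ t x, σ t x = 1 → σ (t + 1) x ≠ 1 →
      d ≤ Set.ncard {y | nbr1 d x y ∧ σ t y = -1})
    (t₀ : ℕ) (hinit : ∀ x, (∀ i, |x i| ≤ L) → σ t₀ x = 1) :
    ∀ t, t₀ ≤ t → ∀ x : Fin d → ℤ,
      (∀ i, |x i| ≤ L) → ¬ (∀ i, L - M + 1 ≤ |x i|) → σ t x = 1 := by
  intro t ht x hx1 hx2
  by_cases hd0 : d = 0
  · exact absurd (fun i => absurd i.isLt (by omega)) hx2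
  -- x is in the protected set
  have hxS : ∀ ε, ∃ j, |f ε j j - cornerPt d L ε j| ≤ |x j - cornerPt d L ε j| := by
    intro ε
    push_neg at hx2
    obtain ⟨j, hj⟩ := hx2
    refine ⟨j, ?_⟩
    have h1 : |f ε j j - cornerPt d L ε j| ≤ M := (hf ε j).2.1
    have h2 := hx1 j
    rcases Bool.eq_false_or_eq_true (ε j) with hε | hε <;>
      [rw [cornerPt_true hε] at h1 ⊢; rw [cornerPt_false hε] at h1 ⊢] <;>
      simp only [Int.abs_eq_natAbs] at h1 h2 hj ⊢ <;> omega
  -- main induction: every protected vertex stays +1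
  have main : ∀ u, t₀ ≤ u → ∀ y : Fin d → ℤ, (∀ i, |y i| ≤ L) →
      (∀ ε, ∃ j, |f ε j j - cornerPt d L ε j| ≤ |y j - cornerPt d L ε j|) →
      σ u y = 1 := by
    intro u hu
    induction u, hu using Nat.le_induction with
    | base => intro y hyB _; exact hinit y hyB
    | succ n hn IH =>
      intro y hyB hyD
      by_cases hyF : ∃ ε j, y = f ε j
      · obtain ⟨ε, j, rfl⟩ := hyF
        exact hfrozen _ ε j
      push_neg at hyF
      by_contra hne
      have hcnt := hflip n y (IH y hyB hyD) hne
      obtain ⟨i₀, hi₀, hiOutD⟩ := key_geom d L M hM hML f hf y hyB hyD hyF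
      -- neighbors
      set In : Fin d → (Fin d → ℤ) :=
        fun i => Function.update y i (y i - if 0 < y i then 1 else -1) with hIndef
      set Out : Fin d → ℤ :=
        Function.update y i₀ (y i₀ + if 0 < y i₀ then 1 else -1) with hOutdef
      have hsne : ∀ i : Fin d, (if 0 < y i then (1:ℤ) else -1) ≠ 0 := by
        intro i; by_cases h0 : 0 < y i <;> simp [h0]
      have hInnbr : ∀ i, nbr1 d y (In i) := by
        intro i
        apply nbr1_update
        by_cases h0 : 0 < y i <;> simp [h0]
      have hOutnbr : nbr1 d y Out := by
        apply nbr1_update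
        by_cases h0 : 0 < y i₀ <;> simp [h0]
      have hInS : ∀ i, σ n (In i) = 1 := by
        intro i
        have h := inward_S d L M hM hML f hf y hyB hyD i
        exact IH _ h.1 h.2
      have hOutB : ∀ m, |Out m| ≤ L := by
        intro m
        by_cases hm : m = i₀
        · subst hm
          rw [hOutdef, Function.update_self]
          by_cases h0 : 0 < y m <;>
            simp only [h0, if_true, if_false] <;>
            simp only [Int.abs_eq_natAbs] at hi₀ ⊢ <;> omega
        · rw [hOutdef, Function.update_of_ne hm]
          exact hyB m
      have hOutS : σ n Out = 1 := IH _ hOutB hiOutD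
      -- the good finset
      set G : Finset (Fin d → ℤ) := insert Out (Finset.image In Finset.univ) with hGdef
      have hInInj : Function.Injective In := by
        intro a b hab
        by_contra hne'
        have h1 := congrFun hab a
        rw [hIndef] at h1
        simp only [Function.update_self, Function.update_of_ne hne'] at h1
        by_cases h0 : 0 < y a <;> simp only [h0, if_true, if_false] at h1 <;> omega
      have hOutNotIn : Out ∉ Finset.image In Finset.univ := by
        intro hmem
        obtain ⟨a, -, ha⟩ := Finset.mem_image.mp hmem
        by_cases hai : a = i₀
        · subst hai
          have h1 := congrFun ha a
          rw [hIndef, hOutdef] at h1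
          simp only [Function.update_self] at h1
          by_cases h0 : 0 < y a <;> simp only [h0, if_true, if_false] at h1 <;> omega
        · have h1 := congrFun ha i₀
          rw [hIndef, hOutdef] at h1
          simp only [Function.update_self, Function.update_of_ne (Ne.symm hai)] at h1
          by_cases h0 : 0 < y i₀ <;> simp only [h0, if_true, if_false] at h1 <;> omega
      have hGcard : G.card = d + 1 := by
        rw [hGdef, Finset.card_insert_of_notMem hOutNotIn,
          Finset.card_image_of_injective _ hInInj]
        simp
      have hGgood : ∀ z ∈ G, nbr1 d y z ∧ σ n z = 1 := by
        intro z hz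
        rw [hGdef, Finset.mem_insert] at hz
        rcases hz with rfl | hz
        · exact ⟨hOutnbr, hOutS⟩
        · obtain ⟨a, -, rfl⟩ := Finset.mem_image.mp hz
          exact ⟨hInnbr a, hInS a⟩
      -- counting
      set A : Set (Fin d → ℤ) := {z | nbr1 d y z ∧ σ n z = -1} with hAdef
      set NB : Finset (Fin d → ℤ) := Finset.image
        (fun p : Fin d × Bool => Function.update y p.1 (y p.1 + if p.2 then 1 else -1))
        Finset.univ with hNBdef
      have hAsub : A ⊆ ↑NB := fun z hz => nbr_mem_image hz.1
      have hGsub : ↑G ⊆ ↑NB := fun z hz => nbr_mem_image (hGgood z hz).1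
      have hAfin : A.Finite := Set.Finite.subset NB.finite_toSet hAsub
      have hdisj : Disjoint A ↑G := by
        rw [Set.disjoint_left]
        intro z hz hzG
        have h1 := (hGgood z hzG).2
        have h2 := hz.2
        omega
      have hU : (A ∪ ↑G).ncard ≤ NB.card := by
        rw [← Set.ncard_coe_finset]
        exact Set.ncard_le_ncard (Set.union_subset hAsub hGsub) NB.finite_toSet
      have hUeq : (A ∪ ↑G).ncard = A.ncard + G.card := by
        rw [Set.ncard_union_eq hdisj hAfin G.finite_toSet, Set.ncard_coe_finset]
      have hNB : NB.card ≤ 2 * d := by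
        refine le_trans Finset.card_image_le ?_
        simp [mul_comm]
      omega
  exact main t ht x hx1 hxS
end
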